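/- Let I = (G,q,π) be an instance of Unique Label Cover with OPT(I) ≥ 1 − ε for some 0 < ε < 1, and let G' be its label-extended graph. Then there exists a subset S of the vertex set of G' with μ_{G'}(S) = μ_{G'}/q and conductance φ_{G'}(S) at most ε. -/

import Mathlib

open scoped Classical
open Matrix

noncomputable section

namespace Sublinear

variable {V : Type*}

/-- The degree `d(v)` of a vertex, as a real number. -/
def deg [Fintype V] (G : SimpleGraph V) (v : V) : ℝ :=
  ((Finset.univ.filter fun u => G.Adj v u).card : ℝ)

/-- The volume `μ_G(S)` of a set of vertices. -/
def vol [Fintype V] (G : SimpleGraph V) (S : Set V) : ℝ :=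
  ∑ v ∈ Finset.univ.filter (fun v => v ∈ S), deg G v

/-- The number of ordered adjacent pairs `(u,v)` with `u ∈ S`, `v ∈ T`.
For disjoint `S`, `T` this equals the number `e_G(S,T)` of edges between `S` and `T`. -/
def eB [Fintype V] (G : SimpleGraph V) (S T : Set V) : ℝ :=
  (((Finset.univ : Finset (V × V)).filter
      fun p => p.1 ∈ S ∧ p.2 ∈ T ∧ G.Adj p.1 p.2).card : ℝ)

/-- The number `e_G(S)` of edges with both endpoints in `S`. -/
def eIn [Fintype V] (G : SimpleGraph V) (S : Set V) : ℝ := eB G S S / 2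

/-- The conductance `φ_G(S)` of a set of vertices. -/
def cond [Fintype V] (G : SimpleGraph V) (S : Set V) : ℝ :=
  eB G S Sᶜ / vol G S

/-- The conductance `φ_G` of the graph: the minimum of `φ_G(S)` over nonempty `S`
with `μ_G(S) ≤ μ_G/2`. -/
def conductance [Fintype V] (G : SimpleGraph V) : ℝ :=
  sInf {x | ∃ S : Set V, S.Nonempty ∧ vol G S ≤ vol G Set.univ / 2 ∧ x = cond G S}

/-- The label-extended graph `G'` of a Unique Label Cover instance `I = (G, q, π)`
(with labels `Fin q`): vertices are pairs `(u,i)`, and `(u,i)` is adjacent to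
`(v,j)` iff `{u,v}` is an edge of `G` and `j = π u v i`. -/
def ulcExt {V : Type*} (G : SimpleGraph V) {q : ℕ} (π : V → V → Equiv.Perm (Fin q))
    (hπ : ∀ u v, G.Adj u v → π v u = (π u v)⁻¹) : SimpleGraph (V × Fin q) where
  Adj p p' := G.Adj p.1 p'.1 ∧ p'.2 = π p.1 p'.1 p.2
  symm := by
    constructor
    rintro ⟨u, i⟩ ⟨v, j⟩ ⟨hadj, hj⟩
    refine ⟨hadj.symm, ?_⟩
    simp only at hj ⊢
    rw [hπ u v hadj, hj]
    simp
  loopless := by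
    constructor
    rintro ⟨u, i⟩ ⟨hadj, _⟩
    exact G.loopless.irrefl u hadj

/-- The fraction of the edges of `G` that are satisfied by the assignment `ψ`
in the Unique Label Cover instance `(G, q, π)`: an edge `{u,v}` is satisfied
if `ψ v = π u v (ψ u)`. -/
def ulcSatFrac [Fintype V] (G : SimpleGraph V) {q : ℕ}
    (π : V → V → Equiv.Perm (Fin q)) (ψ : V → Fin q) : ℝ :=
  (((Finset.univ : Finset (V × V)).filter
      fun p => G.Adj p.1 p.2 ∧ ψ p.2 = π p.1 p.2 (ψ p.1)).card : ℝ)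
    / eB G Set.univ Set.univ

section Aux

variable [Fintype V] (G : SimpleGraph V) {q : ℕ} (π : V → V → Equiv.Perm (Fin q))
  (hπ : ∀ u v, G.Adj u v → π v u = (π u v)⁻¹)

lemma deg_ulcExt (v : V) (i : Fin q) :
    deg (ulcExt G π hπ) (v, i) = deg G v := by
  unfold deg
  norm_cast
  apply Finset.card_nbij' (fun p => p.1) (fun u => (u, π v u i))
  · intro p hp
    simp only [Finset.mem_coe, Finset.mem_filter, Finset.mem_univ, true_and] at hp ⊢
    simp only [ulcExt] at hp ⊢
    exact hp.1
  · intro u hu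
    simp only [Finset.mem_coe, Finset.mem_filter, Finset.mem_univ, true_and] at hu ⊢
    simp only [ulcExt] at hu ⊢
    exact ⟨hu, trivial⟩
  · intro p hp
    simp only [Finset.mem_coe, Finset.mem_filter, Finset.mem_univ, true_and] at hp
    simp only [ulcExt] at hp
    exact Prod.ext rfl hp.2.symm
  · intro u hu
    rfl

lemma eB_univ_eq_vol : eB G Set.univ Set.univ = vol G Set.univ := by
  unfold eB vol deg
  norm_cast
  simp only [Set.mem_univ, true_and, Finset.filter_true]
  rw [Finset.card_filter, ← Finset.univ_product_univ, Finset.sum_product]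
  exact Finset.sum_congr rfl fun v _ => (Finset.card_filter _ _).symm

lemma vol_ulcExt_univ :
    vol (ulcExt G π hπ) Set.univ = q * vol G Set.univ := by
  unfold vol
  simp only [Set.mem_univ, Finset.filter_true]
  rw [← Finset.univ_product_univ, Finset.sum_product_right]
  simp only [deg_ulcExt]
  rw [Finset.sum_const, nsmul_eq_mul]
  simp

lemma vol_ulcExt_range (ψ : V → Fin q) :
    vol (ulcExt G π hπ) (Set.range fun v => (v, ψ v)) = vol G Set.univ := by
  unfold vol
  simp only [Set.mem_univ, Finset.filter_true]
  apply Finset.sum_nbij' (fun p => p.1) (fun v => (v, ψ v))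
  · intro p hp; exact Finset.mem_univ _
  · intro v _
    simp only [Finset.mem_filter, Finset.mem_univ, true_and, Set.mem_range]
    exact ⟨v, rfl⟩
  · intro p hp
    simp only [Finset.mem_filter, Finset.mem_univ, true_and, Set.mem_range] at hp
    obtain ⟨v, hv⟩ := hp
    rw [← hv]
  · intro v _; rfl
  · intro p hp
    simp only [Finset.mem_filter, Finset.mem_univ, true_and, Set.mem_range] at hp
    obtain ⟨v, hv⟩ := hp
    rw [← hv, deg_ulcExt]

lemma eB_ulcExt_range (ψ : V → Fin q) :
    eB (ulcExt G π hπ) (Set.range fun v => (v, ψ v))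
      (Set.range fun v => (v, ψ v))ᶜ =
    ((Finset.univ.filter fun p : V × V =>
        G.Adj p.1 p.2 ∧ ¬ ψ p.2 = π p.1 p.2 (ψ p.1)).card : ℝ) := by
  unfold eB
  norm_cast
  apply Finset.card_nbij' (fun p => (p.1.1, p.2.1))
    (fun p => ((p.1, ψ p.1), (p.2, π p.1 p.2 (ψ p.1))))
  · rintro ⟨⟨u, i⟩, ⟨v, j⟩⟩ hp
    simp only [Finset.mem_coe, Finset.mem_filter, Finset.mem_univ, true_and, Set.mem_range,
      Set.mem_compl_iff, ulcExt, Prod.mk.injEq, not_exists] at hp ⊢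
    obtain ⟨⟨u', hu1, hu2⟩, hnc, hadj, hj⟩ := hp
    subst hu1; subst hu2
    refine ⟨hadj, ?_⟩
    intro h
    exact hnc v ⟨rfl, by rw [h, ← hj]⟩
  · rintro ⟨u, v⟩ hp
    simp only [Finset.mem_coe, Finset.mem_filter, Finset.mem_univ, true_and, Set.mem_range,
      Set.mem_compl_iff, ulcExt, Prod.mk.injEq, not_exists] at hp ⊢
    obtain ⟨hadj, hne⟩ := hp
    refine ⟨⟨u, rfl, rfl⟩, ?_, hadj, trivial⟩
    rintro w ⟨rfl, hw⟩
    exact hne hw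
  · rintro ⟨⟨u, i⟩, ⟨v, j⟩⟩ hp
    simp only [Finset.mem_coe, Finset.mem_filter, Finset.mem_univ, true_and, Set.mem_range,
      Set.mem_compl_iff, ulcExt, Prod.mk.injEq, not_exists] at hp
    obtain ⟨⟨u', hu1, hu2⟩, hnc, hadj, hj⟩ := hp
    subst hu1; subst hu2
    rw [hj]
  · rintro ⟨u, v⟩ hp
    rfl

end Aux

/-- If `I = (G,q,π)` is a Unique Label Cover instance with
`OPT(I) ≥ 1 - ε`, `0 < ε < 1`, then the label-extended graph `G'` contains a set
`S` of volume `μ_{G'}/q` and conductance at most `ε`. -/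
theorem ulc_completeness_small_conductance_set
    {V : Type*} [Fintype V] (G : SimpleGraph V)
    (hdeg : ∀ v, 1 ≤ deg G v)
    (q : ℕ) (hq : 1 ≤ q)
    (π : V → V → Equiv.Perm (Fin q))
    (hπ : ∀ u v, G.Adj u v → π v u = (π u v)⁻¹)
    (ε : ℝ) (hε0 : 0 < ε) (hε1 : ε < 1)
    (hopt : ∃ ψ : V → Fin q, 1 - ε ≤ ulcSatFrac G π ψ) :
    ∃ S : Set (V × Fin q),
      vol (ulcExt G π hπ) S = vol (ulcExt G π hπ) Set.univ / q ∧
      cond (ulcExt G π hπ) S ≤ ε := by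
  obtain ⟨ψ, hψ⟩ := hopt
  set T : ℝ := eB G Set.univ Set.univ with hT
  set sat : ℝ := (((Finset.univ : Finset (V × V)).filter
      fun p => G.Adj p.1 p.2 ∧ ψ p.2 = π p.1 p.2 (ψ p.1)).card : ℝ) with hsat
  set unsat : ℝ := (((Finset.univ : Finset (V × V)).filter
      fun p => G.Adj p.1 p.2 ∧ ¬ ψ p.2 = π p.1 p.2 (ψ p.1)).card : ℝ) with hunsat
  have hTnonneg : 0 ≤ T := by rw [hT, eB]; positivity
  have hTpos : 0 < T := by
    rcases hTnonneg.lt_or_eq with h | h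
    · exact h
    · exfalso
      rw [ulcSatFrac, ← hT, ← h, div_zero] at hψ
      linarith
  have hsplit : sat + unsat = T := by
    rw [hsat, hunsat, hT]
    unfold eB
    norm_cast
    simp only [Set.mem_univ, true_and, Finset.filter_true]
    have := Finset.card_filter_add_card_filter_not
      (s := (Finset.univ : Finset (V × V)).filter fun p => G.Adj p.1 p.2)
      (p := fun p => ψ p.2 = π p.1 p.2 (ψ p.1))
    rw [Finset.filter_filter, Finset.filter_filter] at this
    exact this
  have hsatge : (1 - ε) * T ≤ sat := by
    have := hψ
    rw [ulcSatFrac, ← hT, ← hsat, le_div_iff₀ hTpos] at this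
    linarith [this]
  have hunsatle : unsat ≤ ε * T := by nlinarith
  refine ⟨Set.range fun v => (v, ψ v), ?_, ?_⟩
  · rw [vol_ulcExt_range, vol_ulcExt_univ]
    have hq0 : (q : ℝ) ≠ 0 := Nat.cast_ne_zero.mpr (by omega)
    field_simp
  · rw [cond, vol_ulcExt_range, eB_ulcExt_range, ← hunsat,
      ← eB_univ_eq_vol, ← hT, div_le_iff₀ hTpos]
    linarith

end Sublinear
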